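/- Let κ and λ be infinite cardinals with κ regular, κ ≤ λ, and λ ≥ 𝔠. Let X ⊆ ᵏλ be a subspace of weight at most λ, and let (X, 𝔐, μ) be a weak λ⁺-measure space, over any positively totally ordered monoid S, which is ω₁-Dirac, i.e., supp(μ) is second countable. Then for every open set U ⊆ X with μ(U) > 0 there is x ∈ U such that either {x} ∉ 𝔐 or μ({x}) > 0. -/

import Mathlib

open Cardinal Set

noncomputable section

/-- The type of `ι`-indexed sequences in `A`, as a type synonym carrying the bounded topology. -/
def GSeq (ι A : Type) : Type := ι → A

/-- The bounded topology on `GSeq ι A`: the topology generated by the cones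
`N_s = {y | ∀ i < b, y i = x i}`. -/
instance GSeq.topologicalSpace (ι A : Type) [LinearOrder ι] : TopologicalSpace (GSeq ι A) :=
  TopologicalSpace.generateFrom
    {C : Set (GSeq ι A) | ∃ (x : ι → A) (b : ι), C = {y : GSeq ι A | ∀ i, i < b → y i = x i}}

/-- The weight of a topological space: the least cardinality of a basis for its topology. -/
def tweight (X : Type) [TopologicalSpace X] : Cardinal :=
  ⨅ B : {B : Set (Set X) // TopologicalSpace.IsTopologicalBasis B}, #↥(B.1)

/-- `S` is a positively totally ordered monoid (on top of given `AddMonoid` and `LinearOrder`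
structures): the addition is weakly monotone in both arguments, `0` is the least element, and
the positive cone `S⁺ = {a | 0 < a}` is nonempty. -/
structure IsPTOM (S : Type*) [AddMonoid S] [LinearOrder S] : Prop where
  add_le_add : ∀ a b c d : S, a ≤ b → c ≤ d → a + c ≤ b + d
  zero_le : ∀ a : S, 0 ≤ a
  exists_pos : ∃ a : S, 0 < a

/-- The sum of `f` over a finite set `F` of indices, taken in increasing order of the indices. -/
def finSum {ι : Type*} [LinearOrder ι] {S : Type*} [AddMonoid S] (f : ι → S) (F : Finset ι) : S :=
  ((F.sort (· ≤ ·)).map f).sum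

/-- `μ` is a continuous measure: every singleton is measurable and has measure `0`. -/
def MeasureContinuous {X : Type} [TopologicalSpace X] {S : Type*} [Zero S]
    (M : Set (Set X)) (μ : Set X → S) : Prop :=
  ∀ x : X, {x} ∈ M ∧ μ {x} = 0

/-- `(X, M, μ)` is a weak `λ⁺`-measure space (with `lam` playing the role of `λ`):
`M` contains all open sets and is closed under unions of at most `lam` many sets,
and `μ` satisfies the axioms (M1)-(M5). -/
structure IsWeakMeasureSpace (X : Type) [TopologicalSpace X] (lam : Cardinal)
    (S : Type*) [AddMonoid S] [LinearOrder S] (M : Set (Set X)) (μ : Set X → S) : Prop where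
  open_mem : ∀ U : Set X, IsOpen U → U ∈ M
  sUnion_mem : ∀ 𝒜 : Set (Set X), 𝒜 ⊆ M → #↥𝒜 ≤ lam → ⋃₀ 𝒜 ∈ M
  measure_empty : μ ∅ = 0
  measure_univ_pos : 0 < μ Set.univ
  mono : ∀ A B : Set X, A ∈ M → B ∈ M → A ⊆ B → μ A ≤ μ B
  additive : ∀ (γ : Ordinal) (A : γ.ToType → Set X), γ.card ≤ lam →
    (∀ i, A i ∈ M) → Pairwise (Function.onFun Disjoint A) →
    IsLUB {s : S | ∃ F : Finset γ.ToType, s = finSum (fun i => μ (A i)) F} (μ (⋃ i, A i))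
  point_reg : ∀ (x : X) (γ : Ordinal) (A : γ.ToType → Set X),
    {x} ∈ M → γ.card ≤ lam →
    (∀ i, IsOpen (A i) ∧ x ∈ A i) →
    (∀ U : Set X, IsOpen U → x ∈ U → ∃ i, A i ⊆ U) →
    IsGLB (Set.range fun i => μ (A i)) (μ {x})

/-- The support of `μ`: the complement of the union of all open sets of measure `0`. -/
def msupp {X : Type} [TopologicalSpace X] {S : Type*} [Zero S] (μ : Set X → S) : Set X :=
  (⋃₀ {U : Set X | IsOpen U ∧ μ U = 0})ᶜ

def cone {ι A : Type} [LinearOrder ι] (x : ι → A) (b : ι) : Set (GSeq ι A) :=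
  {y : GSeq ι A | ∀ i, i < b → y i = x i}

theorem cone_isOpen {ι A : Type} [LinearOrder ι] (x : ι → A) (b : ι) :
    IsOpen (cone x b) :=
  TopologicalSpace.isOpen_generateFrom_of_mem ⟨x, b, rfl⟩

theorem mem_cone_self {ι A : Type} [LinearOrder ι] (x : ι → A) (b : ι) :
    (x : GSeq ι A) ∈ cone x b := fun _ _ => rfl

theorem cone_anti {ι A : Type} [LinearOrder ι] (x : ι → A) {b b' : ι} (h : b ≤ b') :
    cone x b' ⊆ cone x b := fun _ hy i hi => hy i (lt_of_lt_of_le hi h)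

theorem exists_cone_subset {ι A : Type} [LinearOrder ι] [Nonempty ι]
    {V : Set (GSeq ι A)} (hV : IsOpen V) :
    ∀ z ∈ V, ∃ b : ι, cone z b ⊆ V := by
  have hV' : TopologicalSpace.GenerateOpen
      {C : Set (GSeq ι A) | ∃ (x : ι → A) (b : ι), C = {y : GSeq ι A | ∀ i, i < b → y i = x i}} V :=
    hV
  clear hV
  induction hV' with
  | basic s hs =>
    obtain ⟨x, b, rfl⟩ := hs
    intro z hz
    exact ⟨b, fun w hw i hi => (hw i hi).trans (hz i hi)⟩
  | univ => exact fun z _ => ⟨Classical.arbitrary ι, subset_univ _⟩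
  | inter s t hs ht ihs iht =>
    intro z hz
    obtain ⟨b1, hb1⟩ := ihs z hz.1
    obtain ⟨b2, hb2⟩ := iht z hz.2
    exact ⟨max b1 b2, subset_inter ((cone_anti z (le_max_left _ _)).trans hb1)
      ((cone_anti z (le_max_right _ _)).trans hb2)⟩
  | sUnion Sc hSc ih =>
    intro z hz
    obtain ⟨t, ht, hzt⟩ := hz
    obtain ⟨b, hb⟩ := ih t ht z hzt
    exact ⟨b, hb.trans (subset_sUnion_of_mem ht)⟩

theorem gseq_t2 {ι A : Type} [LinearOrder ι] (hmax : ∀ i : ι, ∃ b, i < b) :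
    T2Space (GSeq ι A) := by
  constructor
  intro x y hxy
  have : ∃ i, x i ≠ y i := by
    by_contra h
    push_neg at h
    exact hxy (funext h)
  obtain ⟨i, hi⟩ := this
  obtain ⟨b, hb⟩ := hmax i
  refine ⟨cone x b, cone y b, cone_isOpen x b, cone_isOpen y b,
    mem_cone_self x b, mem_cone_self y b, ?_⟩
  rw [Set.disjoint_iff]
  rintro w ⟨hw1, hw2⟩
  exact hi ((hw1 i hb).symm.trans (hw2 i hb))

theorem mk_le_continuum_of_t0 {α : Type*} [TopologicalSpace α] [T0Space α]
    [SecondCountableTopology α] : #α ≤ Cardinal.continuum := by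
  obtain ⟨B, hBc, -, hB⟩ := TopologicalSpace.exists_countable_basis α
  have hinj : Function.Injective (fun x : α => {b : B | x ∈ (b : Set α)}) := by
    intro x y hxy
    rw [← inseparable_iff_eq]
    have hxy' : ∀ b ∈ B, x ∈ b ↔ y ∈ b := by
      intro b hb
      have := Set.ext_iff.mp hxy (⟨b, hb⟩ : B)
      exact this
    have : nhds x = nhds y := by
      ext s
      rw [hB.mem_nhds_iff, hB.mem_nhds_iff]
      constructor
      · rintro ⟨t, htB, hxt, hts⟩
        exact ⟨t, htB, (hxy' t htB).mp hxt, hts⟩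
      · rintro ⟨t, htB, hyt, hts⟩
        exact ⟨t, htB, (hxy' t htB).mpr hyt, hts⟩
    rw [inseparable_iff_eq] at *
    exact (inseparable_iff_eq (X := α)).mp (by rwa [Inseparable])
  calc #α ≤ #(Set B) := Cardinal.mk_le_of_injective hinj
    _ ≤ Cardinal.continuum := by
        rw [Cardinal.mk_set]
        have : #B ≤ ℵ₀ := hBc.le_aleph0 -- guess
        calc (2:Cardinal) ^ #B ≤ (2:Cardinal) ^ ℵ₀ := by
              exact Cardinal.power_le_power_left (by norm_num) this
          _ = Cardinal.continuum := by rw [Cardinal.two_power_aleph0]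

section MainAux

variable {ι A : Type} [LinearOrder ι]

/-- The trace on `X` of the cone of `y` of length `b`. -/
def trX (X : Set (GSeq ι A)) (y : ↥X) (b : ι) : Set ↥X :=
  Subtype.val ⁻¹' cone (Subtype.val y) b

theorem trX_isOpen (X : Set (GSeq ι A)) (y : ↥X) (b : ι) : IsOpen (trX X y b) :=
  (cone_isOpen _ _).preimage continuous_subtype_val

theorem mem_trX_self (X : Set (GSeq ι A)) (y : ↥X) (b : ι) : y ∈ trX X y b :=
  mem_cone_self _ _

variable [WellFoundedLT ι] [Nonempty ι] {S : Type*} [Zero S]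

open Classical in
/-- The minimal length of a cone around `y` whose trace has measure zero (junk value if none). -/
def bselX (X : Set (GSeq ι A)) (μ : Set ↥X → S) (y : ↥X) : ι :=
  if h : ∃ b, μ (trX X y b) = 0 then
    (IsWellFounded.wf (r := ((· < ·) : ι → ι → Prop))).min {b | μ (trX X y b) = 0} h
  else Classical.arbitrary ι

/-- The selected measure-zero cone trace around `y`. -/
def DX (X : Set (GSeq ι A)) (μ : Set ↥X → S) (y : ↥X) : Set ↥X :=
  trX X y (bselX X μ y)

open Classical in
theorem bselX_spec {X : Set (GSeq ι A)} {μ : Set ↥X → S} {y : ↥X}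
    (h : ∃ b, μ (trX X y b) = 0) : μ (DX X μ y) = 0 := by
  rw [DX, bselX, dif_pos h]
  exact (IsWellFounded.wf (r := ((· < ·) : ι → ι → Prop))).min_mem {b | μ (trX X y b) = 0} h

open Classical in
theorem bselX_min {X : Set (GSeq ι A)} {μ : Set ↥X → S} {y : ↥X}
    (h : ∃ b, μ (trX X y b) = 0) {b : ι} (hb : μ (trX X y b) = 0) : ¬ b < bselX X μ y := by
  rw [bselX, dif_pos h]
  exact (IsWellFounded.wf (r := ((· < ·) : ι → ι → Prop))).not_lt_min {b | μ (trX X y b) = 0} hb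

theorem DX_eq_of_le {X : Set (GSeq ι A)} {μ : Set ↥X → S} {y y' : ↥X}
    (hy : ∃ b, μ (trX X y b) = 0) (hy' : ∃ b, μ (trX X y' b) = 0)
    (hle : bselX X μ y ≤ bselX X μ y') (hnd : ¬ Disjoint (DX X μ y) (DX X μ y')) :
    DX X μ y = DX X μ y' := by
  rw [Set.not_disjoint_iff] at hnd
  obtain ⟨z, hz1, hz2⟩ := hnd
  have hz1' : ∀ i, i < bselX X μ y → (Subtype.val z) i = (Subtype.val y) i := hz1
  have hz2' : ∀ i, i < bselX X μ y' → (Subtype.val z) i = (Subtype.val y') i := hz2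
  have hagree : ∀ i, i < bselX X μ y → (Subtype.val y') i = (Subtype.val y) i := fun i hi =>
    (hz2' i (lt_of_lt_of_le hi hle)).symm.trans (hz1' i hi)
  have hconeeq : cone (Subtype.val y') (bselX X μ y) = cone (Subtype.val y) (bselX X μ y) := by
    ext w
    constructor
    · intro hw i hi
      exact (hw i hi).trans (hagree i hi)
    · intro hw i hi
      exact (hw i hi).trans (hagree i hi).symm
  have htreq : trX X y' (bselX X μ y) = DX X μ y := by
    rw [DX, trX, trX, hconeeq]
  have h0 : μ (trX X y' (bselX X μ y)) = 0 := by rw [htreq]; exact bselX_spec hy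
  have hge : ¬ bselX X μ y < bselX X μ y' := bselX_min hy' h0
  have heq : bselX X μ y' = bselX X μ y := le_antisymm (not_lt.mp hge) hle
  simp only [DX]
  rw [heq]
  exact htreq.symm

theorem DX_eq_or_disjoint {X : Set (GSeq ι A)} {μ : Set ↥X → S} {y y' : ↥X}
    (hy : ∃ b, μ (trX X y b) = 0) (hy' : ∃ b, μ (trX X y' b) = 0) :
    DX X μ y = DX X μ y' ∨ Disjoint (DX X μ y) (DX X μ y') := by
  by_cases hnd : Disjoint (DX X μ y) (DX X μ y')
  · exact Or.inr hnd
  · rcases le_total (bselX X μ y) (bselX X μ y') with hle | hle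
    · exact Or.inl (DX_eq_of_le hy hy' hle hnd)
    · exact Or.inl (DX_eq_of_le hy' hy hle (fun hd => hnd hd.symm)).symm

end MainAux

/-- assume `λ ≥ 𝔠`. If `(X, 𝔐, μ)` is an `ω₁`-Dirac weak `λ⁺`-measure space on
some `X ⊆ ᵏλ` of weight at most `λ` (over any positively totally ordered monoid), then every
open `U` of positive measure contains a point that is either non-measurable or of positive
measure. -/
theorem statement_8 (κ lam : Cardinal) (hκ : κ.IsRegular) (hκlam : κ ≤ lam) (hlam : ℵ₀ ≤ lam)
    (hc : Cardinal.continuum ≤ lam)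
    (X : Set (GSeq κ.ord.ToType lam.ord.ToType)) (hw : tweight ↥X ≤ lam)
    (S : Type) [AddMonoid S] [LinearOrder S] (hS : IsPTOM S)
    (M : Set (Set ↥X)) (μ : Set ↥X → S)
    (hμ : IsWeakMeasureSpace ↥X lam S M μ)
    (hdirac : SecondCountableTopology ↥(msupp μ)) :
    ∀ U : Set ↥X, IsOpen U → 0 < μ U →
      ∃ x ∈ U, ({x} : Set ↥X) ∉ M ∨ 0 < μ {x} := by
  classical
  intro U hUopen hUpos
  by_contra hcon
  push_neg at hcon
  have hsing : ∀ x ∈ U, ({x} : Set ↥X) ∈ M ∧ μ {x} = 0 := fun x hx =>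
    ⟨(hcon x hx).1, le_antisymm (hcon x hx).2 (hS.zero_le _)⟩
  -- basic facts about the index order
  haveI hne : Nonempty κ.ord.ToType := Ordinal.nonempty_toType_iff.mpr (by
    rw [ne_eq, Cardinal.ord_eq_zero]
    exact hκ.pos.ne')
  have hmax : ∀ i : κ.ord.ToType, ∃ b, i < b := by
    intro i
    have hlim : Order.IsSuccLimit κ.ord := Cardinal.isSuccLimit_ord hκ.aleph0_le
    obtain ⟨⟨o, ho⟩, rfl⟩ := (Ordinal.ToType.mk (o := κ.ord)).surjective i
    refine ⟨Ordinal.ToType.mk (o := κ.ord) ⟨o + 1, ?_⟩, ?_⟩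
    · rw [Ordinal.add_one_eq_succ]
      exact hlim.succ_lt ho
    · rw [OrderIso.lt_iff_lt]
      exact Subtype.mk_lt_mk.mpr (lt_add_one o)
  haveI hT2 : T2Space (GSeq κ.ord.ToType lam.ord.ToType) := gseq_t2 hmax
  haveI := hdirac
  have hsuppcard : #↥(msupp μ) ≤ Cardinal.continuum := mk_le_continuum_of_t0
  -- the complement of the support
  have hsuppc : (msupp μ)ᶜ = ⋃₀ {V : Set ↥X | IsOpen V ∧ μ V = 0} := by
    rw [msupp, compl_compl]
  -- every point outside the support has a measure-zero cone trace around it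
  have hQ : ∀ y : ↥X, y ∈ (msupp μ)ᶜ → ∃ b, μ (trX X y b) = 0 := by
    intro y hy
    rw [hsuppc] at hy
    obtain ⟨V, ⟨hVopen, hV0⟩, hyV⟩ := hy
    obtain ⟨W, hWopen, hWV⟩ := isOpen_induced_iff.mp hVopen
    have hyW : (Subtype.val y) ∈ W := by rw [← hWV] at hyV; exact hyV
    obtain ⟨b, hb⟩ := exists_cone_subset hWopen (Subtype.val y) hyW
    refine ⟨b, le_antisymm ?_ (hS.zero_le _)⟩
    have hsub : trX X y b ⊆ V := by
      rw [← hWV]; exact fun w hw => hb hw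
    rw [← hV0]
    exact hμ.mono _ _ (hμ.open_mem _ (trX_isOpen X y b)) (hμ.open_mem _ hVopen) hsub
  -- the selected measure-zero cone traces cover the complement of the support
  have hD0 : ∀ y : ↥X, y ∈ (msupp μ)ᶜ → μ (DX X μ y) = 0 := fun y hy => bselX_spec (hQ y hy)
  have hDsub : ∀ y : ↥X, y ∈ (msupp μ)ᶜ → DX X μ y ⊆ (msupp μ)ᶜ := by
    intro y hy
    rw [hsuppc]
    exact subset_sUnion_of_mem ⟨trX_isOpen _ _ _, hD0 y hy⟩
  -- a basis of size at most lam
  obtain ⟨B, hB, hBcard⟩ : ∃ B : Set (Set ↥X),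
      TopologicalSpace.IsTopologicalBasis B ∧ #↥B ≤ lam := by
    haveI : Nonempty {B : Set (Set ↥X) // TopologicalSpace.IsTopologicalBasis B} :=
      ⟨⟨_, TopologicalSpace.isTopologicalBasis_opens⟩⟩
    have hmem := csInf_mem (Set.range_nonempty
      (fun B : {B : Set (Set ↥X) // TopologicalSpace.IsTopologicalBasis B} => #↥(B.1)))
    obtain ⟨B, hBeq⟩ := hmem
    exact ⟨B.1, B.2, le_trans (le_of_eq hBeq) hw⟩
  -- the two families
  set 𝒟 : Set (Set ↥X) := DX X μ '' ((msupp μ)ᶜ) with h𝒟def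
  set 𝒮 : Set (Set ↥X) := (fun x : ↥X => ({x} : Set ↥X)) '' (U ∩ msupp μ) with h𝒮def
  set 𝒜 : Set (Set ↥X) := 𝒮 ∪ 𝒟 with h𝒜def
  -- cardinality bounds
  have h𝒟card : #↥𝒟 ≤ lam := by
    have hpick : ∀ E : ↥𝒟, ∃ (b : Set ↥X) (y : ↥X), b ∈ B ∧ y ∈ b ∧ b ⊆ E.1 ∧
        y ∈ (msupp μ)ᶜ ∧ DX X μ y = E.1 := by
      rintro ⟨E, y, hy, rfl⟩
      obtain ⟨b, hbB, hyb, hbE⟩ := hB.exists_subset_of_mem_open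
        (mem_trX_self X y (bselX X μ y)) (trX_isOpen X y (bselX X μ y))
      exact ⟨b, y, hbB, hyb, hbE, hy, rfl⟩
    choose f y hfB hyf hfE hyc hDy using hpick
    have hinj : Function.Injective (fun E : ↥𝒟 => (⟨f E, hfB E⟩ : ↥B)) := by
      intro E E' hEE'
      have hfeq : f E = f E' := congrArg Subtype.val hEE'
      by_contra hne'
      have hED : Disjoint E.1 E'.1 := by
        rcases DX_eq_or_disjoint (hQ _ (hyc E)) (hQ _ (hyc E')) with heq | hdisj
        · exact absurd (Subtype.ext ((hDy E).symm.trans (heq.trans (hDy E')))) hne'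
        · rw [hDy E, hDy E'] at hdisj; exact hdisj
      have h1 : y E ∈ E.1 := hfE E (hyf E)
      have h2 : y E ∈ E'.1 := hfE E' (hfeq ▸ hyf E)
      exact (Set.disjoint_iff.mp hED ⟨h1, h2⟩)
    exact le_trans (Cardinal.mk_le_of_injective hinj) hBcard
  have h𝒮card : #↥𝒮 ≤ lam :=
    le_trans Cardinal.mk_image_le (le_trans (Cardinal.mk_le_mk_of_subset inter_subset_right)
      (le_trans hsuppcard hc))
  have h𝒜card : #↥𝒜 ≤ lam := by
    refine le_trans (Cardinal.mk_union_le _ _) ?_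
    refine le_trans (add_le_add h𝒮card h𝒟card) ?_
    rw [Cardinal.add_eq_self hlam]
  -- membership and measure-zero
  have h𝒜M : ∀ E ∈ 𝒜, E ∈ M := by
    rintro E (⟨x, hx, rfl⟩ | ⟨y, hy, rfl⟩)
    · exact (hsing x hx.1).1
    · exact hμ.open_mem _ (trX_isOpen _ _ _)
  have h𝒜0 : ∀ E ∈ 𝒜, μ E = 0 := by
    rintro E (⟨x, hx, rfl⟩ | ⟨y, hy, rfl⟩)
    · exact (hsing x hx.1).2
    · exact hD0 y hy
  -- pairwise disjointness
  have h𝒜disj : ∀ E ∈ 𝒜, ∀ E' ∈ 𝒜, E ≠ E' → Disjoint E E' := by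
    rintro E (⟨x, hx, rfl⟩ | ⟨y, hy, rfl⟩) E' (⟨x', hx', rfl⟩ | ⟨y', hy', rfl⟩) hne'
    · refine Set.disjoint_singleton.mpr fun h => hne' (by rw [h])
    · refine Set.disjoint_singleton_left.mpr fun h => ?_
      exact (hDsub y' hy' h) hx.2
    · refine (Set.disjoint_singleton_right.mpr fun h => ?_)
      exact (hDsub y hy h) hx'.2
    · rcases DX_eq_or_disjoint (hQ y hy) (hQ y' hy') with heq | hdisj
      · exact absurd heq hne'
      · exact hdisj
  -- U is covered
  have hUsub : U ⊆ ⋃₀ 𝒜 := by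
    intro x hx
    by_cases hxs : x ∈ msupp μ
    · exact ⟨{x}, Or.inl ⟨x, ⟨hx, hxs⟩, rfl⟩, rfl⟩
    · exact ⟨DX X μ x, Or.inr ⟨x, hxs, rfl⟩, mem_trX_self _ _ _⟩
  have hbigM : ⋃₀ 𝒜 ∈ M := hμ.sUnion_mem 𝒜 h𝒜M h𝒜card
  -- enumerate 𝒜
  have hmkA : #((#↥𝒜).ord.ToType) = #↥𝒜 := Cardinal.mk_ord_toType _
  obtain ⟨e⟩ : Nonempty ((#↥𝒜).ord.ToType ≃ ↥𝒜) := Cardinal.eq.mp hmkA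
  set A : (#↥𝒜).ord.ToType → Set ↥X := fun i => ((e i : ↥𝒜) : Set ↥X) with hAdef
  have hApair : Pairwise (Function.onFun Disjoint A) := by
    intro i j hij
    refine h𝒜disj _ (e i).2 _ (e j).2 fun h => hij (e.injective (Subtype.ext h))
  have hiU : ⋃ i, A i = ⋃₀ 𝒜 := by
    rw [Set.sUnion_eq_iUnion]
    exact e.surjective.iUnion_comp _
  have hlub := hμ.additive (#↥𝒜).ord A (by rw [Cardinal.card_ord]; exact h𝒜card)
    (fun i => h𝒜M _ (e i).2) hApair
  have hzero : ∀ i, μ (A i) = 0 := fun i => h𝒜0 _ (e i).2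
  have hsetzero : {s : S | ∃ F : Finset ((#↥𝒜).ord.ToType),
      s = finSum (fun i => μ (A i)) F} = {0} := by
    ext s
    simp only [mem_setOf_eq, mem_singleton_iff]
    constructor
    · rintro ⟨F, rfl⟩
      rw [finSum]
      apply List.sum_eq_zero
      intro x hx
      rw [List.mem_map] at hx
      obtain ⟨i, -, rfl⟩ := hx
      exact hzero i
    · rintro rfl
      exact ⟨∅, by simp [finSum]⟩
  have hμbig : μ (⋃ i, A i) = 0 := by
    rw [hsetzero] at hlub
    exact hlub.unique isLUB_singleton
  have hμU : μ U ≤ 0 := by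
    have h1 : μ U ≤ μ (⋃ i, A i) := by
      refine hμ.mono U _ (hμ.open_mem U hUopen) ?_ ?_
      · rw [hiU]; exact hbigM
      · rw [hiU]; exact hUsub
    rwa [hμbig] at h1
  exact absurd hUpos (not_lt.mpr hμU)

end
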